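/- Let K be a field, f, g ∈ K[x], d a natural number, and α ∈ K. Then Sres_d(f,g) evaluated/composed at x+α equals Sres_d(f(x+α), g(x+α)), i.e., the order-d subresultant commutes with translation of the variable: Sres_d(f,g)(x+α) = Sres_d(f(x+α), g(x+α))(x). -/

import Mathlib

open Polynomial Finset

noncomputable section

/-- The Sylvester-type matrix defining the order-`d` subresultant of `f` and `g`
(of respective degrees `m` and `n`): an `(m+n-2d) × (m+n-2d)` matrix over `K[x]`
whose first `n-d` rows carry the coefficients of `f` (and `x^(n-d-1-i)·f` in the
last column) and whose last `m-d` rows carry the coefficients of `g`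
(and `x^(m-d-1-i)·g` in the last column). -/
def sresMatrix {K : Type*} [Field K] (m n d : ℕ) (f g : K[X]) :
    Matrix (Fin (m + n - 2 * d)) (Fin (m + n - 2 * d)) K[X] :=
  Matrix.of fun i j =>
    if (i : ℕ) < n - d then
      if (j : ℕ) = m + n - 2 * d - 1 then X ^ (n - d - 1 - (i : ℕ)) * f
      else if (j : ℕ) ≤ m + (i : ℕ) then C (f.coeff (m + (i : ℕ) - (j : ℕ))) else 0
    else
      if (j : ℕ) = m + n - 2 * d - 1 then X ^ (m - d - 1 - ((i : ℕ) - (n - d))) * g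
      else if (j : ℕ) ≤ n + ((i : ℕ) - (n - d)) then
        C (g.coeff (n + ((i : ℕ) - (n - d)) - (j : ℕ)))
      else 0

/-- The order-`d` polynomial subresultant `Sres_d(f,g)` of `f` and `g`, of respective
degrees `m` and `n`. -/
def Sres {K : Type*} [Field K] (m n d : ℕ) (f g : K[X]) : K[X] :=
  (sresMatrix m n d f g).det

/-- The `d`-th principal subresultant: the coefficient of `x^d` in `Sres_d(f,g)`. -/
def PSres {K : Type*} [Field K] (m n d : ℕ) (f g : K[X]) : K :=
  (Sres m n d f g).coeff d

end

noncomputable section SresAux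

namespace SresAux

variable {K : Type*} [Field K]

/-- Generic matrix: coefficient columns from `a`, last column from `b`. -/
def SMat (N : ℕ) (D : Fin N → ℕ) (a b : Fin N → K[X]) : Matrix (Fin N) (Fin N) K[X] :=
  Matrix.of fun i j => if (j : ℕ) = N - 1 then b i else C ((a i).coeff (D j))

lemma coeff_comp_X_add_C (q : K[X]) (α : K) (B s : ℕ) (hq : q.natDegree < B + 1) :
    (q.comp (X + C α)).coeff s
      = ∑ t ∈ Finset.range (B + 1), q.coeff t * (α ^ (t - s) * ((t.choose s : K))) := by
  conv_lhs => rw [q.as_sum_range' (B + 1) hq]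
  rw [show ((∑ t ∈ Finset.range (B + 1), monomial t (q.coeff t)).comp (X + C α))
        = ∑ t ∈ Finset.range (B + 1), (monomial t (q.coeff t)).comp (X + C α) by
      simp [comp, eval₂_finset_sum]]
  rw [finset_sum_coeff]
  refine Finset.sum_congr rfl fun t _ => ?_
  rw [← C_mul_X_pow_eq_monomial, mul_comp, C_comp, pow_comp, X_comp, coeff_C_mul,
    coeff_X_add_C_pow]

lemma pow_X_add_C_mul (α : K) (κ : ℕ) (r : K[X]) :
    (X + C α) ^ κ * r
      = ∑ l ∈ Finset.range (κ + 1), (α ^ (κ - l) * (κ.choose l : K)) • (X ^ l * r) := by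
  have h1 : ((X + C α) ^ κ : K[X])
      = ∑ l ∈ Finset.range (κ + 1), C (α ^ (κ - l) * (κ.choose l : K)) * X ^ l := by
    have hdeg : ((X + C α) ^ κ : K[X]).natDegree < κ + 1 := by
      have h := natDegree_pow_le (p := (X + C α : K[X])) (n := κ)
      rw [natDegree_X_add_C] at h
      omega
    conv_lhs => rw [((X + C α) ^ κ : K[X]).as_sum_range' (κ + 1) hdeg]
    refine Finset.sum_congr rfl fun l _ => ?_
    rw [coeff_X_add_C_pow, C_mul_X_pow_eq_monomial]
  rw [h1, Finset.sum_mul]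
  refine Finset.sum_congr rfl fun l _ => ?_
  rw [smul_eq_C_mul, mul_assoc]

lemma det_SMat_row {N : ℕ} (D : Fin N → ℕ) (β : Fin N → Fin N → K)
    (hdiag : ∀ i, β i i = 1) (htri : ∀ i i' : Fin N, i' < i → β i i' = 0)
    (a b a' b' : Fin N → K[X])
    (ha : ∀ i, a' i = ∑ i', β i i' • a i')
    (hb : ∀ i, b' i = ∑ i', β i i' • b i') :
    (SMat N D a' b').det = (SMat N D a b).det := by
  have key : SMat N D a' b' = (Matrix.of fun i i' => (C (β i i') : K[X])) * SMat N D a b := by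
    refine Matrix.ext fun i j => ?_
    rw [Matrix.mul_apply]
    simp only [SMat, Matrix.of_apply]
    by_cases hj : (j : ℕ) = N - 1
    · rw [if_pos hj, hb]
      refine Finset.sum_congr rfl fun i' _ => ?_
      rw [if_pos hj, smul_eq_C_mul]
    · rw [if_neg hj, ha, finset_sum_coeff, map_sum]
      refine Finset.sum_congr rfl fun i' _ => ?_
      rw [if_neg hj, coeff_smul, smul_eq_mul, C_mul]
  rw [key, Matrix.det_mul]
  have hdet : (Matrix.of fun i i' => (C (β i i') : K[X])).det = 1 := by
    rw [Matrix.det_of_upperTriangular (by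
      intro i j hij
      simp only [Matrix.of_apply]
      rw [htri i j hij, map_zero])]
    simp [hdiag]
  rw [hdet, one_mul]

lemma det_SMat_col {N : ℕ} (hN : 0 < N) (D : Fin N → ℕ) (γ : Fin N → Fin N → K)
    (hdiag : ∀ j, γ j j = 1) (htri : ∀ j' j : Fin N, j < j' → γ j' j = 0)
    (hlast : ∀ j' j : Fin N, (j' : ℕ) ≠ N - 1 → (j : ℕ) = N - 1 → γ j' j = 0)
    (a b c : Fin N → K[X])
    (hc : ∀ i j : Fin N, (j : ℕ) ≠ N - 1 →
      (c i).coeff (D j) = ∑ j', (a i).coeff (D j') * γ j' j) :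
    (SMat N D c b).det = (SMat N D a b).det := by
  have key : SMat N D c b = SMat N D a b * (Matrix.of fun j' j => (C (γ j' j) : K[X])) := by
    refine Matrix.ext fun i j => ?_
    rw [Matrix.mul_apply]
    simp only [SMat, Matrix.of_apply]
    by_cases hj : (j : ℕ) = N - 1
    · rw [if_pos hj, Finset.sum_eq_single j]
      · rw [if_pos hj, hdiag, map_one, mul_one]
      · intro j' _ hj'
        have hne : (j' : ℕ) ≠ N - 1 := fun h => hj' (Fin.ext (h.trans hj.symm))
        rw [if_neg hne, hlast j' j hne hj, map_zero, mul_zero]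
      · intro h
        exact absurd (Finset.mem_univ _) h
    · rw [if_neg hj, hc i j hj, map_sum]
      refine Finset.sum_congr rfl fun j' _ => ?_
      by_cases hj' : (j' : ℕ) = N - 1
      · rw [if_pos hj']
        have hlt : j < j' := by
          rw [Fin.lt_def]
          have := j.2
          omega
        rw [htri j' j hlt, mul_zero, map_zero, mul_zero]
      · rw [if_neg hj', map_mul]
  rw [key, Matrix.det_mul]
  have hdet : (Matrix.of fun j' j => (C (γ j' j) : K[X])).det = 1 := by
    rw [Matrix.det_of_upperTriangular (by
      intro j' j hij
      simp only [Matrix.of_apply]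
      rw [htri j' j hij, map_zero])]
    simp [hdiag]
  rw [hdet, mul_one]

end SresAux

end SresAux
noncomputable section SresAux2

namespace SresAux

variable {K : Type*} [Field K]

/-- The last-column entries of the subresultant matrix, as a function. -/
def pfun (m n d : ℕ) (f g : K[X]) : Fin (m + n - 2 * d) → K[X] := fun i =>
  if (i : ℕ) < n - d then X ^ (n - d - 1 - (i : ℕ)) * f
  else X ^ (m - d - 1 - ((i : ℕ) - (n - d))) * g

/-- Those entries after composing with `X + C α`. -/
def qfun (m n d : ℕ) (α : K) (f g : K[X]) : Fin (m + n - 2 * d) → K[X] := fun i =>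
  if (i : ℕ) < n - d then (X + C α) ^ (n - d - 1 - (i : ℕ)) * f.comp (X + C α)
  else (X + C α) ^ (m - d - 1 - ((i : ℕ) - (n - d))) * g.comp (X + C α)

/-- The degrees attached to the columns. -/
def Dfun (m n d : ℕ) : Fin (m + n - 2 * d) → ℕ := fun j => m + n - d - 1 - (j : ℕ)

lemma pfun_comp (m n d : ℕ) (α : K) (f g : K[X]) (i : Fin (m + n - 2 * d)) :
    (pfun m n d f g i).comp (X + C α) = qfun m n d α f g i := by
  unfold pfun qfun
  split_ifs <;> rw [mul_comp, pow_comp, X_comp]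

lemma sresMatrix_eq (m n d : ℕ) (hdm : d < m) (hdn : d < n) (f g : K[X]) :
    sresMatrix m n d f g
      = SMat (m + n - 2 * d) (Dfun m n d) (pfun m n d f g) (pfun m n d f g) := by
  refine Matrix.ext fun i j => ?_
  have hi := i.2
  have hj := j.2
  simp only [sresMatrix, SMat, pfun, Dfun, Matrix.of_apply]
  by_cases hib : (i : ℕ) < n - d
  · rw [if_pos hib, if_pos hib]
    by_cases hjl : (j : ℕ) = m + n - 2 * d - 1
    · rw [if_pos hjl, if_pos hjl]
    · rw [if_neg hjl, if_neg hjl, coeff_X_pow_mul']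
      by_cases hle : (j : ℕ) ≤ m + (i : ℕ)
      · have hcond : n - d - 1 - (i : ℕ) ≤ m + n - d - 1 - (j : ℕ) := by omega
        have harg : m + n - d - 1 - (j : ℕ) - (n - d - 1 - (i : ℕ)) = m + (i : ℕ) - (j : ℕ) := by
          omega
        rw [if_pos hle, if_pos hcond, harg]
      · have hcond : ¬ n - d - 1 - (i : ℕ) ≤ m + n - d - 1 - (j : ℕ) := by omega
        rw [if_neg hle, if_neg hcond, map_zero]
  · rw [if_neg hib, if_neg hib]
    by_cases hjl : (j : ℕ) = m + n - 2 * d - 1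
    · rw [if_pos hjl, if_pos hjl]
    · rw [if_neg hjl, if_neg hjl, coeff_X_pow_mul']
      by_cases hle : (j : ℕ) ≤ n + ((i : ℕ) - (n - d))
      · have hcond : m - d - 1 - ((i : ℕ) - (n - d)) ≤ m + n - d - 1 - (j : ℕ) := by omega
        have harg : m + n - d - 1 - (j : ℕ) - (m - d - 1 - ((i : ℕ) - (n - d)))
            = n + ((i : ℕ) - (n - d)) - (j : ℕ) := by omega
        rw [if_pos hle, if_pos hcond, harg]
      · have hcond : ¬ m - d - 1 - ((i : ℕ) - (n - d)) ≤ m + n - d - 1 - (j : ℕ) := by omega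
        rw [if_neg hle, if_neg hcond, map_zero]

end SresAux

end SresAux2
noncomputable section SresAux3

namespace SresAux

variable {K : Type*} [Field K]

/-- Shift exponents of the rows. -/
def kfun (m n d : ℕ) : Fin (m + n - 2 * d) → ℕ := fun i =>
  if (i : ℕ) < n - d then n - d - 1 - (i : ℕ) else m - d - 1 - ((i : ℕ) - (n - d))

lemma det_q_eq_det_p (m n d : ℕ) (hdm : d < m) (hdn : d < n) (α : K) (f g : K[X])
    (hf : f.natDegree = m) (hg : g.natDegree = n) :
    (SMat (m + n - 2 * d) (Dfun m n d) (qfun m n d α f g) (qfun m n d α f g)).det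
      = (SMat (m + n - 2 * d) (Dfun m n d) (pfun m n d f g) (qfun m n d α f g)).det := by
  refine det_SMat_col (by omega) (Dfun m n d)
    (fun j' j => if (j : ℕ) = m + n - 2 * d - 1 then (if j' = j then (1 : K) else 0)
      else if j' ≤ j then
        α ^ (Dfun m n d j' - Dfun m n d j) * ((Dfun m n d j').choose (Dfun m n d j) : K)
      else 0)
    ?_ ?_ ?_ _ _ _ ?_
  · intro j
    by_cases hj : (j : ℕ) = m + n - 2 * d - 1
    · rw [if_pos hj, if_pos rfl]
    · rw [if_neg hj, if_pos le_rfl, Nat.sub_self, pow_zero, one_mul, Nat.choose_self,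
        Nat.cast_one]
  · intro j' j hlt
    by_cases hj : (j : ℕ) = m + n - 2 * d - 1
    · rw [if_pos hj, if_neg (Fin.ne_of_gt hlt)]
    · rw [if_neg hj, if_neg (fun h => absurd (lt_of_lt_of_le hlt h) (lt_irrefl _))]
  · intro j' j hne hj
    rw [if_pos hj, if_neg (fun h => hne (by rw [h]; exact hj))]
  · intro i j hj
    rw [← pfun_comp m n d α f g i]
    have hdeg : (pfun m n d f g i).natDegree < (m + n - d - 1) + 1 := by
      unfold pfun
      split_ifs with h
      · have h1 := natDegree_mul_le (p := (X : K[X]) ^ (n - d - 1 - (i : ℕ))) (q := f)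
        rw [natDegree_X_pow, hf] at h1
        omega
      · have hi2 := i.2
        have h1 := natDegree_mul_le
          (p := (X : K[X]) ^ (m - d - 1 - ((i : ℕ) - (n - d)))) (q := g)
        rw [natDegree_X_pow, hg] at h1
        omega
    rw [coeff_comp_X_add_C _ α (m + n - d - 1) _ hdeg]
    have hjlt : (j : ℕ) < m + n - 2 * d - 1 := by
      have := j.2
      omega
    have hsval : Dfun m n d j = m + n - d - 1 - (j : ℕ) := rfl
    have L : ∑ t ∈ Finset.range (m + n - d - 1 + 1),
          (pfun m n d f g i).coeff t
            * (α ^ (t - Dfun m n d j) * ((t.choose (Dfun m n d j) : K)))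
        = ∑ t ∈ Finset.Icc (Dfun m n d j) (m + n - d - 1),
          (pfun m n d f g i).coeff t
            * (α ^ (t - Dfun m n d j) * ((t.choose (Dfun m n d j) : K))) := by
      refine (Finset.sum_subset ?_ ?_).symm
      · intro t ht
        simp only [Finset.mem_Icc, Finset.mem_range] at *
        omega
      · intro t htr hti
        simp only [Finset.mem_Icc, Finset.mem_range] at htr hti
        have hlt : t < Dfun m n d j := by omega
        rw [Nat.choose_eq_zero_of_lt hlt, Nat.cast_zero, mul_zero, mul_zero]
    have R : ∑ j' : Fin (m + n - 2 * d),
          (pfun m n d f g i).coeff (Dfun m n d j')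
            * (if (j : ℕ) = m + n - 2 * d - 1 then (if j' = j then (1 : K) else 0)
              else if j' ≤ j then
                α ^ (Dfun m n d j' - Dfun m n d j)
                  * ((Dfun m n d j').choose (Dfun m n d j) : K)
              else 0)
        = ∑ j' ∈ Finset.univ.filter (fun j' : Fin (m + n - 2 * d) => j' ≤ j),
          (pfun m n d f g i).coeff (Dfun m n d j')
            * (α ^ (Dfun m n d j' - Dfun m n d j)
                * ((Dfun m n d j').choose (Dfun m n d j) : K)) := by
      rw [Finset.sum_filter]
      refine Finset.sum_congr rfl fun j' _ => ?_
      rw [if_neg hj]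
      by_cases hle : j' ≤ j
      · rw [if_pos hle, if_pos hle]
      · rw [if_neg hle, if_neg hle, mul_zero]
    rw [L, R]
    refine Finset.sum_bij'
      (fun t ht => (⟨m + n - d - 1 - t, by
        simp only [Finset.mem_Icc, Dfun] at ht
        have := j.2
        omega⟩ : Fin (m + n - 2 * d)))
      (fun j' _ => m + n - d - 1 - (j' : ℕ)) ?_ ?_ ?_ ?_ ?_
    · intro t ht
      simp only [Finset.mem_Icc, Dfun] at ht
      simp only [Finset.mem_filter, Finset.mem_univ, true_and, Fin.le_def]
      have := j.2
      omega
    · intro j' hj'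
      simp only [Finset.mem_filter, Finset.mem_univ, true_and, Fin.le_def] at hj'
      simp only [Finset.mem_Icc, Dfun]
      have := j'.2
      omega
    · intro t ht
      simp only [Finset.mem_Icc, Dfun] at ht
      simp only
      omega
    · intro j' hj'
      simp only [Finset.mem_filter, Finset.mem_univ, true_and, Fin.le_def] at hj'
      have := j'.2
      refine Fin.ext ?_
      simp only
      omega
    · intro t ht
      simp only [Finset.mem_Icc, Dfun] at ht
      have h1 : m + n - d - 1 - (m + n - d - 1 - t) = t := by omega
      simp only [Dfun, h1]
lemma qfun_expand (m n d : ℕ) (hdm : d < m) (hdn : d < n) (α : K) (f g : K[X]) (h0 : Fin (m + n - 2 * d) → K[X])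
    (hh0 : h0 = pfun m n d (f.comp (X + C α)) (g.comp (X + C α))) (i : Fin (m + n - 2 * d)) :
    qfun m n d α f g i
      = ∑ i' : Fin (m + n - 2 * d),
          (if (((i : ℕ) < n - d) ↔ ((i' : ℕ) < n - d)) ∧ i ≤ i'
            then α ^ (kfun m n d i - kfun m n d i')
              * ((kfun m n d i).choose (kfun m n d i') : K)
            else 0) • h0 i' := by
  subst hh0
  have hi2 := i.2
  by_cases hib : (i : ℕ) < n - d
  · rw [show qfun m n d α f g i
        = (X + C α) ^ (n - d - 1 - (i : ℕ)) * f.comp (X + C α) from if_pos hib]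
    rw [pow_X_add_C_mul]
    have hres : ∑ i' : Fin (m + n - 2 * d),
          (if (((i : ℕ) < n - d) ↔ ((i' : ℕ) < n - d)) ∧ i ≤ i'
            then α ^ (kfun m n d i - kfun m n d i')
              * ((kfun m n d i).choose (kfun m n d i') : K)
            else 0) • pfun m n d (f.comp (X + C α)) (g.comp (X + C α)) i'
        = ∑ i' ∈ Finset.univ.filter
            (fun i' : Fin (m + n - 2 * d) => (i' : ℕ) < n - d ∧ i ≤ i'),
          (α ^ (kfun m n d i - kfun m n d i')
              * ((kfun m n d i).choose (kfun m n d i') : K))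
            • pfun m n d (f.comp (X + C α)) (g.comp (X + C α)) i' := by
      rw [Finset.sum_filter]
      refine Finset.sum_congr rfl fun x _ => ?_
      by_cases hx : (x : ℕ) < n - d ∧ i ≤ x
      · rw [if_pos hx, if_pos ⟨iff_of_true hib hx.1, hx.2⟩]
      · rw [if_neg hx, if_neg ?_, zero_smul]
        rintro ⟨hiff, hle⟩
        exact hx ⟨hiff.mp hib, hle⟩
    rw [hres]
    refine Finset.sum_nbij'
      (fun l => (⟨n - d - 1 - l, by omega⟩ : Fin (m + n - 2 * d)))
      (fun i' => n - d - 1 - (i' : ℕ)) ?_ ?_ ?_ ?_ ?_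
    · intro l hl
      simp only [Finset.mem_range] at hl
      simp only [Finset.mem_filter, Finset.mem_univ, true_and, Fin.le_def, Fin.val_mk]
      omega
    · intro i' hi'
      simp only [Finset.mem_filter, Finset.mem_univ, true_and, Fin.le_def] at hi'
      simp only [Finset.mem_range]
      omega
    · intro l hl
      simp only [Finset.mem_range] at hl
      simp only [Fin.val_mk]
      omega
    · intro i' hi'
      simp only [Finset.mem_filter, Finset.mem_univ, true_and, Fin.le_def] at hi'
      refine Fin.ext ?_
      simp only [Fin.val_mk]
      omega
    · intro l hl
      simp only [Finset.mem_range] at hl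
      have hk1 : kfun m n d i = n - d - 1 - (i : ℕ) := if_pos hib
      have hk2 : kfun m n d (⟨n - d - 1 - l, by omega⟩ : Fin (m + n - 2 * d)) = l := by
        simp only [kfun, Fin.val_mk]
        rw [if_pos (by omega : n - d - 1 - l < n - d)]
        omega
      have hp : pfun m n d (f.comp (X + C α)) (g.comp (X + C α))
            (⟨n - d - 1 - l, by omega⟩ : Fin (m + n - 2 * d))
          = X ^ l * f.comp (X + C α) := by
        simp only [pfun, Fin.val_mk]
        rw [if_pos (by omega : n - d - 1 - l < n - d)]
        congr 2
        omega
      rw [hk1, hk2, hp]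
  · rw [show qfun m n d α f g i
        = (X + C α) ^ (m - d - 1 - ((i : ℕ) - (n - d))) * g.comp (X + C α) from if_neg hib]
    rw [pow_X_add_C_mul]
    have hres : ∑ i' : Fin (m + n - 2 * d),
          (if (((i : ℕ) < n - d) ↔ ((i' : ℕ) < n - d)) ∧ i ≤ i'
            then α ^ (kfun m n d i - kfun m n d i')
              * ((kfun m n d i).choose (kfun m n d i') : K)
            else 0) • pfun m n d (f.comp (X + C α)) (g.comp (X + C α)) i'
        = ∑ i' ∈ Finset.univ.filter
            (fun i' : Fin (m + n - 2 * d) => ¬ (i' : ℕ) < n - d ∧ i ≤ i'),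
          (α ^ (kfun m n d i - kfun m n d i')
              * ((kfun m n d i).choose (kfun m n d i') : K))
            • pfun m n d (f.comp (X + C α)) (g.comp (X + C α)) i' := by
      rw [Finset.sum_filter]
      refine Finset.sum_congr rfl fun x _ => ?_
      by_cases hx : ¬ (x : ℕ) < n - d ∧ i ≤ x
      · rw [if_pos hx, if_pos ⟨iff_of_false hib hx.1, hx.2⟩]
      · rw [if_neg hx, if_neg ?_, zero_smul]
        rintro ⟨hiff, hle⟩
        exact hx ⟨fun hxl => hib (hiff.mpr hxl), hle⟩
    rw [hres]
    refine Finset.sum_nbij'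
      (fun l => (⟨(n - d) + (m - d - 1 - l), by omega⟩ : Fin (m + n - 2 * d)))
      (fun i' => m - d - 1 - ((i' : ℕ) - (n - d))) ?_ ?_ ?_ ?_ ?_
    · intro l hl
      simp only [Finset.mem_range] at hl
      simp only [Finset.mem_filter, Finset.mem_univ, true_and, Fin.le_def, Fin.val_mk, not_lt]
      omega
    · intro i' hi'
      simp only [Finset.mem_filter, Finset.mem_univ, true_and, Fin.le_def, not_lt] at hi'
      simp only [Finset.mem_range]
      omega
    · intro l hl
      simp only [Finset.mem_range] at hl
      simp only [Fin.val_mk]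
      omega
    · intro i' hi'
      simp only [Finset.mem_filter, Finset.mem_univ, true_and, Fin.le_def, not_lt] at hi'
      have := i'.2
      refine Fin.ext ?_
      simp only [Fin.val_mk]
      omega
    · intro l hl
      simp only [Finset.mem_range] at hl
      have hk1 : kfun m n d i = m - d - 1 - ((i : ℕ) - (n - d)) := if_neg hib
      have hk2 : kfun m n d (⟨(n - d) + (m - d - 1 - l), by omega⟩ : Fin (m + n - 2 * d))
          = l := by
        simp only [kfun, Fin.val_mk]
        rw [if_neg (by omega : ¬ (n - d) + (m - d - 1 - l) < n - d)]
        omega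
      have hp : pfun m n d (f.comp (X + C α)) (g.comp (X + C α))
            (⟨(n - d) + (m - d - 1 - l), by omega⟩ : Fin (m + n - 2 * d))
          = X ^ l * g.comp (X + C α) := by
        simp only [pfun, Fin.val_mk]
        rw [if_neg (by omega : ¬ (n - d) + (m - d - 1 - l) < n - d)]
        congr 2
        omega
      rw [hk1, hk2, hp]

lemma det_q_eq_det_ptilde (m n d : ℕ) (hdm : d < m) (hdn : d < n) (α : K) (f g : K[X]) :
    (SMat (m + n - 2 * d) (Dfun m n d) (qfun m n d α f g) (qfun m n d α f g)).det
      = (SMat (m + n - 2 * d) (Dfun m n d)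
          (pfun m n d (f.comp (X + C α)) (g.comp (X + C α)))
          (pfun m n d (f.comp (X + C α)) (g.comp (X + C α)))).det := by
  refine det_SMat_row (Dfun m n d)
    (fun i i' => if (((i : ℕ) < n - d) ↔ ((i' : ℕ) < n - d)) ∧ i ≤ i'
      then α ^ (kfun m n d i - kfun m n d i')
        * ((kfun m n d i).choose (kfun m n d i') : K)
      else 0) ?_ ?_ _ _ _ _ ?_ ?_
  · intro i
    rw [if_pos ⟨Iff.rfl, le_rfl⟩, Nat.sub_self, pow_zero, one_mul, Nat.choose_self, Nat.cast_one]
  · intro i i' hlt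
    rw [if_neg (fun h => absurd (lt_of_lt_of_le hlt h.2) (lt_irrefl _))]
  · intro i
    exact qfun_expand m n d hdm hdn α f g _ rfl i
  · intro i
    exact qfun_expand m n d hdm hdn α f g _ rfl i

end SresAux

end SresAux3
/-- The subresultant commutes with translation of the variable:
`Sres_d(f,g)(x+α) = Sres_d(f(x+α), g(x+α))(x)`. -/
theorem sres_comp_translation {K : Type*} [Field K] (m n d : ℕ) (f g : K[X]) (α : K)
    (hf : f.natDegree = m) (hg : g.natDegree = n) (hdm : d < m) (hdn : d < n) :
    (Sres m n d f g).comp (X + C α) =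
      Sres m n d (f.comp (X + C α)) (g.comp (X + C α)) := by
  classical
  rw [Sres, Sres, SresAux.sresMatrix_eq m n d hdm hdn f g,
    SresAux.sresMatrix_eq m n d hdm hdn (f.comp (X + C α)) (g.comp (X + C α))]
  have e1 : (SresAux.SMat (m + n - 2 * d) (SresAux.Dfun m n d)
        (SresAux.pfun m n d f g) (SresAux.pfun m n d f g)).det.comp (X + C α)
      = (SresAux.SMat (m + n - 2 * d) (SresAux.Dfun m n d)
          (SresAux.pfun m n d f g) (SresAux.qfun m n d α f g)).det := by
    rw [show (SresAux.SMat (m + n - 2 * d) (SresAux.Dfun m n d)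
          (SresAux.pfun m n d f g) (SresAux.pfun m n d f g)).det.comp (X + C α)
        = (compRingHom (X + C α)) (SresAux.SMat (m + n - 2 * d) (SresAux.Dfun m n d)
          (SresAux.pfun m n d f g) (SresAux.pfun m n d f g)).det from rfl,
      RingHom.map_det]
    congr 1
    refine Matrix.ext fun i j => ?_
    simp only [RingHom.mapMatrix_apply, Matrix.map_apply, SresAux.SMat, Matrix.of_apply,
      coe_compRingHom_apply]
    split_ifs with h
    · exact SresAux.pfun_comp m n d α f g i
    · exact C_comp
  rw [e1, ← SresAux.det_q_eq_det_p m n d hdm hdn α f g hf hg,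
    SresAux.det_q_eq_det_ptilde m n d hdm hdn α f g]
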